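/- arXiv:1308.5293 — 2 statements merged into one kernel-verified Lean document; each statement's English description precedes it below -/
import Mathlib

section
/- Let X be a bounded R-diagonal element with cumulant series f_X(z) = Σ_{n≥1} α_n z^n (where α_n = κ_{2n}(X, X*, …, X, X*)), and let a = Re X. Then the R-transform series R_a(z) = Σ_{n≥1} κ_n(a,…,a) z^n equals 2 f_X((z/2)²) as formal power series. -/
/-- The formal power series `2 · f((z/2)²)` obtained by substituting `(z/2)²` into
`f` and doubling: its coefficient at `z^{2n}` is `2 · (coeff n f) / 2^{2n}`, and its
odd coefficients vanish. -/
noncomputable def twoSubstHalfSq (f : PowerSeries ℂ) : PowerSeries ℂ :=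
  PowerSeries.mk fun k =>
    if k % 2 = 0 then 2 * PowerSeries.coeff (k / 2) f * (2 : ℂ)⁻¹ ^ k else 0

/-- Let `X` be a bounded R-diagonal element with cumulant series
`f_X(z) = Σ_{n≥1} α_n zⁿ` (where `α_n` are the alternating cumulants
`κ_{2n}(X,X*,…,X,X*)`), and let `a = Re X = (X + X*)/2`.  Then the R-transform series
`R_a(z) = Σ_{n≥1} κ_n(a,…,a) zⁿ` equals `2 f_X((z/2)²)` as formal power series.
Free cumulants are abstracted as multilinear functionals `κ m`, with hypotheses
recording R-diagonality of `X`. -/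
theorem stmt8 {A : Type*} [Ring A] [Algebra ℂ A] [StarRing A] [StarModule ℂ A]
    (κ : ∀ m : ℕ, MultilinearMap ℂ (fun _ : Fin m => A) ℂ)
    (X : A) (α : ℕ → ℂ)
    (halt1 : ∀ n : ℕ, 1 ≤ n →
      κ (2 * n) (fun i => if i.val % 2 = 0 then X else star X) = α n)
    (halt2 : ∀ n : ℕ, 1 ≤ n →
      κ (2 * n) (fun i => if i.val % 2 = 0 then star X else X) = α n)
    (hvanish : ∀ (m : ℕ) (ε : Fin m → Bool), 1 ≤ m →
      ¬ (m % 2 = 0 ∧ ((∀ i, ε i = decide (i.val % 2 = 0)) ∨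
          (∀ i, ε i = decide (i.val % 2 ≠ 0)))) →
      κ m (fun i => if ε i then X else star X) = 0) :
    (PowerSeries.mk fun k =>
        if k = 0 then 0 else κ k (fun _ => (2 : ℂ)⁻¹ • (X + star X))) =
      twoSubstHalfSq (PowerSeries.mk fun n => if n = 0 then 0 else α n) := by
  classical
  ext k
  simp only [twoSubstHalfSq, PowerSeries.coeff_mk]
  rcases Nat.eq_zero_or_pos k with hk0 | hk
  · subst hk0; simp
  rw [if_neg hk.ne']
  -- expand the multilinear map
  have hexp : (κ k fun _ => (2:ℂ)⁻¹ • (X + star X))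
      = (2:ℂ)⁻¹ ^ k • ∑ r : Fin k → Bool, κ k (fun i => if r i then X else star X) := by
    have h1 : (fun _ : Fin k => (2:ℂ)⁻¹ • (X + star X))
        = fun i : Fin k => (2:ℂ)⁻¹ • (∑ b : Bool, if b then X else star X) := by
      funext i; simp
    rw [h1, (κ k).map_smul_univ, (κ k).map_sum]
    simp
  rw [hexp]
  rcases Nat.even_or_odd k with he | ho
  · obtain ⟨n, rfl⟩ := he
    have hnn : n + n = 2 * n := (two_mul n).symm
    have hn : 1 ≤ n := by omega
    rw [hnn] at hk ⊢
    set ε1 : Fin (2*n) → Bool := fun i => decide (i.val % 2 = 0) with hε1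
    set ε2 : Fin (2*n) → Bool := fun i => decide (i.val % 2 ≠ 0) with hε2
    have hne : ε1 ≠ ε2 := by
      intro h
      have := congrFun h ⟨0, hk⟩
      simp [hε1, hε2] at this
    have hsum : ∑ r : Fin (2*n) → Bool, κ (2*n) (fun i => if r i then X else star X)
        = κ (2*n) (fun i => if ε1 i then X else star X)
          + κ (2*n) (fun i => if ε2 i then X else star X) := by
      have hzero : ∀ r ∈ (Finset.univ : Finset (Fin (2*n) → Bool)),
          r ∉ ({ε1, ε2} : Finset (Fin (2*n) → Bool)) →
          κ (2*n) (fun i => if r i then X else star X) = 0 := by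
        intro r _ hr
        simp only [Finset.mem_insert, Finset.mem_singleton, not_or] at hr
        apply hvanish (2*n) r hk
        rintro ⟨-, h | h⟩
        · exact hr.1 (funext h)
        · exact hr.2 (funext h)
      rw [← Finset.sum_subset (Finset.subset_univ _) hzero, Finset.sum_pair hne]
    have h1 : κ (2*n) (fun i => if ε1 i then X else star X) = α n := by
      rw [← halt1 n hn]
      congr 1
      funext i
      simp [hε1]
    have h2 : κ (2*n) (fun i => if ε2 i then X else star X) = α n := by
      rw [← halt2 n hn]
      congr 1
      funext i
      by_cases h : i.val % 2 = 0 <;> simp [hε2, h]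
    rw [hsum, h1, h2]
    have : (2*n) % 2 = 0 := by omega
    rw [if_pos this]
    have : (2*n)/2 = n := by omega
    rw [this, if_neg (by omega : ¬ n = 0)]
    simp only [smul_eq_mul]
    ring
  · have hodd : ¬ k % 2 = 0 := by
      rcases ho with ⟨m, rfl⟩; omega
    rw [if_neg hodd]
    have : ∀ r : Fin k → Bool, κ k (fun i => if r i then X else star X) = 0 := by
      intro r
      apply hvanish k r hk
      rintro ⟨h, -⟩
      exact hodd h
    simp [this]
end

section
/- Let (μ_n) be a sequence of probability measures on ℝ⁺ such that φφ_{μ_n}(z) = o(z) as z → ∞ in some domain Λ_{α,β}, uniformly in n. Then {μ_n} is a tight family of measures. -/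
open MeasureTheory

/-- The truncated cone `Γ_{α,β} = {x+iy ∈ ℂ⁺ : y > α|x|, |z| > β}`. -/
def GammaCone (α β : ℝ) : Set ℂ := {z | β < ‖z‖ ∧ α * |z.re| < z.im}

/-- The domain `Λ_{α,β} = {|z| > β} \ {x+iy : x > 0, |y| < αx}`. -/
def LambdaDom (α β : ℝ) : Set ℂ :=
  {z | β < ‖z‖ ∧ ¬ (0 < z.re ∧ |z.im| < α * z.re)}

/-- The Cauchy transform `G_μ(z) = ∫ 1/(z-t) dμ(t)`. -/
noncomputable def cauchyTransform (μ : Measure ℝ) (z : ℂ) : ℂ :=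
  ∫ t, (z - (t : ℂ))⁻¹ ∂μ

/-- `φ` is a Voiculescu transform of `μ` on the cone `Γ_{α,β}`: writing
`F_μ = 1/G_μ`, the function `F_μ⁻¹(z) = z + φ(z)` is a right inverse of `F_μ`
taking values in the upper half-plane, and `φ(z) = o(z)`. -/
def IsVoiculescuOnGamma (μ : Measure ℝ) (φ : ℂ → ℂ) (α β : ℝ) : Prop :=
  (∀ z ∈ GammaCone α β,
    0 < (z + φ z).im ∧ cauchyTransform μ (z + φ z) = z⁻¹) ∧
  ∀ ε > (0 : ℝ), ∃ R : ℝ, ∀ z ∈ GammaCone α β,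
    R < ‖z‖ → ‖φ z‖ ≤ ε * ‖z‖

/-- `φ` is a Voiculescu transform of a measure `μ` on `[0,∞)`, defined on the domain
`Λ_{α,β}`: `F_μ⁻¹(z) = z + φ(z)` is a right inverse of `F_μ = 1/G_μ` with values in
`ℂ \ [0,∞)`, and `φ(z) = o(z)`. -/
def IsVoiculescuOnLambda (μ : Measure ℝ) (φ : ℂ → ℂ) (α β : ℝ) : Prop :=
  (∀ z ∈ LambdaDom α β,
    ¬ ((z + φ z).im = 0 ∧ 0 ≤ (z + φ z).re) ∧ cauchyTransform μ (z + φ z) = z⁻¹) ∧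
  ∀ ε > (0 : ℝ), ∃ R : ℝ, ∀ z ∈ LambdaDom α β,
    R < ‖z‖ → ‖φ z‖ ≤ ε * ‖z‖

/-- `φφ` is the `φφ`-transform of `μ` on `Λ_{α,β}`: with
`W_μ(z) = z²/(z + φ_μ(z))`, the function `W_μ⁻¹(z) = z + φφ(z)` is a right inverse
of `W_μ`, i.e. `(z + φφ z)² = z·((z + φφ z) + φ_μ(z + φφ z))`. -/
def IsPhiPhiTransform (μ : Measure ℝ) (φφ : ℂ → ℂ) (α β : ℝ) : Prop :=
  ∃ (φ : ℂ → ℂ) (α' β' : ℝ), 0 < α' ∧ 0 < β' ∧ IsVoiculescuOnLambda μ φ α' β' ∧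
    ∀ z ∈ LambdaDom α β, (z + φφ z) ∈ LambdaDom α' β' ∧
      (z + φφ z) ^ 2 = z * ((z + φφ z) + φ (z + φφ z))

set_option maxHeartbeats 1000000 in
/-- If `(μ_n)` are probability measures on `ℝ⁺` whose `φφ`-transforms
satisfy `φφ_{μ_n}(z) = o(z)` as `z → ∞` in some domain `Λ_{α,β}`, uniformly in `n`,
then `{μ_n}` is a tight family. -/
theorem stmt16 (μ : ℕ → Measure ℝ) [∀ n, IsProbabilityMeasure (μ n)]
    (hsupp : ∀ n, μ n (Set.Iio 0) = 0)
    (φφ : ℕ → ℂ → ℂ) (α β : ℝ) (hα : 0 < α) (hβ : 0 < β)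
    (htrans : ∀ n, IsPhiPhiTransform (μ n) (φφ n) α β)
    (hsmall : ∀ ε > (0 : ℝ), ∃ R : ℝ, ∀ n, ∀ z ∈ LambdaDom α β,
      R < ‖z‖ → ‖φφ n z‖ ≤ ε * ‖z‖) :
    ∀ ε > (0 : ℝ), ∃ K : ℝ, 0 ≤ K ∧ ∀ n, 1 - ε ≤ (μ n (Set.Icc 0 K)).toReal := by
  intro ε hε
  have hδpos : 0 < min ε 1 / 10 := by positivity
  set δ : ℝ := min ε 1 / 10 with hδdef
  have hδε : 10 * δ ≤ ε := by
    have : min ε 1 ≤ ε := min_le_left _ _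
    rw [hδdef]; linarith
  have hδ1 : δ ≤ 1 / 10 := by
    have : min ε 1 ≤ 1 := min_le_right _ _
    rw [hδdef]; linarith
  obtain ⟨R, hR⟩ := hsmall δ hδpos
  set x : ℝ := max R β + 1 with hxdef
  have hxR : R < x := by
    have : R ≤ max R β := le_max_left _ _
    rw [hxdef]; linarith
  have hxβ : β < x := by
    have : β ≤ max R β := le_max_right _ _
    rw [hxdef]; linarith
  have hx0 : 0 < x := lt_trans hβ hxβ
  refine ⟨x, le_of_lt hx0, fun n => ?_⟩
  -- the evaluation point
  set z : ℂ := -(x : ℂ) with hzdef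
  have habsz : ‖z‖ = x := by
    simp [hzdef, abs_of_pos hx0]
  have hz0 : z ≠ 0 := by
    intro h
    rw [h] at habsz
    simp at habsz
    linarith
  have hzmem : z ∈ LambdaDom α β := by
    constructor
    · rw [habsz]; exact hxβ
    · intro ⟨h1, _⟩
      rw [hzdef] at h1
      simp at h1
      linarith
  have he : ‖φφ n z‖ ≤ δ * x := by
    have := hR n z hzmem (by rw [habsz]; exact hxR)
    rwa [habsz] at this
  obtain ⟨φ, α', β', hα', hβ', ⟨hFinv, _⟩, hrel⟩ := htrans n
  obtain ⟨hwdom, hweq⟩ := hrel z hzmem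
  set w : ℂ := z + φφ n z with hwdef
  obtain ⟨-, hG⟩ := hFinv w hwdom
  set u : ℂ := w + φ w with hudef
  clear_value u w z x δ
  have hw0 : w ≠ 0 := by
    intro h
    have hφz : φφ n z = -z := by linear_combination h - hwdef
    have h1 : ‖φφ n z‖ = x := by rw [hφz, norm_neg, habsz]
    rw [h1] at he
    nlinarith
  -- estimate u + x
  have hkey : z * (u + (x : ℂ)) = φφ n z * (φφ n z - 2 * (x : ℂ)) := by
    have h1 : w = -(x : ℂ) + φφ n z := by rw [hwdef, hzdef]
    have h2 : z = -(x : ℂ) := hzdef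
    linear_combination -hweq + (x : ℂ) * h2 + (w - (x : ℂ) + φφ n z) * h1
  have hux : ‖u + (x : ℂ)‖ ≤ 3 * δ * x := by
    have h1 : ‖z‖ * ‖u + (x : ℂ)‖
        = ‖φφ n z‖ * ‖φφ n z - 2 * (x : ℂ)‖ := by
      rw [← norm_mul, ← norm_mul, hkey]
    have h2 : ‖φφ n z - 2 * (x : ℂ)‖ ≤ δ * x + 2 * x := by
      calc ‖φφ n z - 2 * (x : ℂ)‖
          ≤ ‖φφ n z‖ + ‖2 * (x : ℂ)‖ := by
            exact (norm_sub_le _ _)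
        _ ≤ δ * x + 2 * x := by
            have : ‖2 * (x : ℂ)‖ = 2 * x := by
              rw [norm_mul]
              simp [abs_of_pos hx0]
            rw [this]
            linarith
    rw [habsz] at h1
    have h3 : x * ‖u + (x : ℂ)‖ ≤ (δ * x) * (δ * x + 2 * x) := by
      rw [h1]
      exact mul_le_mul he h2 (by positivity) (by positivity)
    have h4 : (δ * x) * (δ * x + 2 * x) ≤ x * (3 * δ * x) := by
      have hδδ : δ * δ ≤ δ := by nlinarith
      nlinarith [mul_pos hx0 hx0]
    have := le_trans h3 h4
    exact le_of_mul_le_mul_left this hx0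
  have hre_ux : |u.re + x| ≤ 3 * δ * x := by
    have : |(u + (x : ℂ)).re| ≤ ‖u + (x : ℂ)‖ := Complex.abs_re_le_norm _
    simpa using le_trans this hux
  have him_ux : |u.im| ≤ 3 * δ * x := by
    have : |(u + (x : ℂ)).im| ≤ ‖u + (x : ℂ)‖ := Complex.abs_im_le_norm _
    simpa using le_trans this hux
  have h3δ : 3 * δ * x ≤ x / 2 := by nlinarith
  have hure : u.re ≤ -x / 2 := by
    have := abs_le.1 hre_ux
    linarith [this.2]
  have hure2 : -2 * x ≤ u.re := by
    have := abs_le.1 hre_ux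
    linarith [this.1]
  have huim : |u.im| ≤ x := le_trans him_ux (by linarith)
  -- a.e. t ≥ 0
  have hae : ∀ᵐ t ∂(μ n), (0 : ℝ) ≤ t := by
    rw [MeasureTheory.ae_iff]
    simpa [Set.Iio, not_le] using hsupp n
  -- integrability of the Cauchy kernel
  have hmeas : AEStronglyMeasurable (fun t : ℝ => (u - (t : ℂ))⁻¹) (μ n) :=
    ((measurable_const.sub Complex.measurable_ofReal).inv).aestronglyMeasurable
  have hkerbd : ∀ t : ℝ, 0 ≤ t → ‖u - (t : ℂ)‖ ≥ x / 2 := by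
    intro t ht
    have h1 : |(u - (t : ℂ)).re| ≤ ‖u - (t : ℂ)‖ := Complex.abs_re_le_norm _
    have h2 : (u - (t : ℂ)).re = u.re - t := by simp
    have h3 : |u.re - t| ≥ x / 2 := by
      rw [abs_sub_comm, abs_of_nonneg (by linarith)]
      linarith
    rw [h2] at h1
    linarith
  have hker0 : ∀ t : ℝ, 0 ≤ t → u - (t : ℂ) ≠ 0 := by
    intro t ht h
    have := hkerbd t ht
    rw [h] at this
    simp at this
    linarith
  have hint : Integrable (fun t : ℝ => (u - (t : ℂ))⁻¹) (μ n) := by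
    refine Integrable.mono' (integrable_const ((x / 2)⁻¹)) hmeas ?_
    filter_upwards [hae] with t ht
    rw [norm_inv]
    have hb := hkerbd t ht
    have : (x / 2) ≤ ‖u - (t : ℂ)‖ := hb
    exact inv_anti₀ (by positivity) this
  -- the function t ↦ t/(t-u)
  set f : ℝ → ℂ := fun t => (t : ℂ) / ((t : ℂ) - u) with hfdef
  have hfae : f =ᵐ[μ n] fun t => 1 - u * (u - (t : ℂ))⁻¹ := by
    filter_upwards [hae] with t ht
    have h0 := hker0 t ht
    have h0' : (t : ℂ) - u ≠ 0 := fun h => h0 (by linear_combination -h)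
    rw [hfdef]
    field_simp
    ring
  have hfint : Integrable f (μ n) :=
    (Integrable.sub (integrable_const 1) (hint.const_mul u)).congr hfae.symm
  have hIval : ∫ t, f t ∂(μ n) = 1 - u * w⁻¹ := by
    rw [integral_congr_ae hfae,
      integral_sub (integrable_const 1) (hint.const_mul u),
      integral_const, integral_const_mul]
    have hGu : (∫ t, (u - (t : ℂ))⁻¹ ∂(μ n)) = w⁻¹ := hG
    rw [hGu]
    simp
  have heq2 : (1 : ℂ) - u * w⁻¹ = -(φφ n z / z) := by
    have huz : u * z = w ^ 2 := by linear_combination -hweq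
    field_simp
    linear_combination -huz - w * hwdef
  have habsI : ‖∫ t, f t ∂(μ n)‖ ≤ δ := by
    rw [hIval, heq2, norm_neg, norm_div, habsz]
    rw [div_le_iff₀ hx0]
    exact he
  -- real part estimates
  set g : ℝ → ℝ := fun t => (f t).re with hgdef
  have hgint : Integrable g (μ n) := hfint.re
  have hgform : ∀ t : ℝ, g t = t * (t - u.re) / Complex.normSq ((t : ℂ) - u) := by
    intro t
    rw [hgdef, hfdef]
    simp [Complex.div_re, Complex.normSq_apply]
    try ring
  have hnormSq : ∀ t : ℝ, Complex.normSq ((t : ℂ) - u) = (t - u.re) ^ 2 + u.im ^ 2 := by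
    intro t
    simp [Complex.normSq_apply]
    try ring
  have hg0 : 0 ≤ᵐ[μ n] g := by
    filter_upwards [hae] with t ht
    rw [hgform]
    exact div_nonneg (mul_nonneg ht (by linarith)) (Complex.normSq_nonneg _)
  have hgsum : ∫ t, g t ∂(μ n) ≤ δ := by
    have h1 : ∫ t, g t ∂(μ n) = (∫ t, f t ∂(μ n)).re := by
      have := integral_re (𝕜 := ℂ) (μ := μ n) hfint
      simpa [RCLike.re_to_complex, hgdef] using this
    rw [h1]
    exact le_trans (Complex.re_le_norm _) habsI
  -- lower bound on the tail
  have hglb : ∀ t ∈ Set.Ioi x, (1 : ℝ) / 10 ≤ g t := by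
    intro t ht
    have htx : x < t := ht
    have ht0 : 0 < t := lt_trans hx0 htx
    rw [hgform, hnormSq]
    have hd : 0 < (t - u.re) ^ 2 + u.im ^ 2 := by nlinarith
    rw [le_div_iff₀ hd]
    have h1 : t - u.re ≤ t + 2 * x := by linarith
    have h2 : t ≤ t - u.re := by linarith
    have h3 : |u.im| ≤ t := le_trans huim (le_of_lt htx)
    have h4 : u.im ^ 2 ≤ t ^ 2 := by
      have := sq_abs u.im
      nlinarith [abs_nonneg u.im]
    have h5 : (t - u.re) ^ 2 ≤ (t + 2 * x) ^ 2 := by nlinarith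
    have h6 : (t + 2 * x) ^ 2 ≤ 9 * t ^ 2 := by nlinarith
    have h7 : t * t ≤ t * (t - u.re) := by nlinarith
    nlinarith [h4, h5, h6, h7]
  have htail : (μ n (Set.Ioi x)).toReal ≤ 10 * δ := by
    have hms : MeasurableSet (Set.Ioi x) := measurableSet_Ioi
    have hμfin : μ n (Set.Ioi x) ≠ ⊤ := measure_ne_top _ _
    have h1 : (1 : ℝ) / 10 * (μ n (Set.Ioi x)).toReal ≤ ∫ t in Set.Ioi x, g t ∂(μ n) :=
      by have := setIntegral_ge_of_const_le_real hms hμfin hglb hgint.integrableOn; rwa [measureReal_def] at this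
    have h2 : ∫ t in Set.Ioi x, g t ∂(μ n) ≤ ∫ t, g t ∂(μ n) :=
      setIntegral_le_integral hgint hg0
    linarith
  -- conclude
  have hcover : (1 : ENNReal) ≤ μ n (Set.Icc 0 x) + μ n (Set.Iio 0) + μ n (Set.Ioi x) := by
    have hsub : (Set.univ : Set ℝ) ⊆ Set.Icc 0 x ∪ Set.Iio 0 ∪ Set.Ioi x := by
      intro t _
      rcases lt_or_ge t 0 with h | h
      · exact Or.inl (Or.inr h)
      · rcases le_or_gt t x with h2 | h2
        · exact Or.inl (Or.inl ⟨h, h2⟩)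
        · exact Or.inr h2
    calc (1 : ENNReal) = μ n Set.univ := (measure_univ).symm
      _ ≤ μ n (Set.Icc 0 x ∪ Set.Iio 0 ∪ Set.Ioi x) := measure_mono hsub
      _ ≤ μ n (Set.Icc 0 x) + μ n (Set.Iio 0) + μ n (Set.Ioi x) := by
          exact le_trans (measure_union_le _ _)
            (add_le_add (measure_union_le _ _) le_rfl)
  rw [hsupp n, add_zero] at hcover
  have ha := measure_ne_top (μ n) (Set.Icc 0 x)
  have hb := measure_ne_top (μ n) (Set.Ioi x)
  have hcover' : (1 : ℝ) ≤ (μ n (Set.Icc 0 x)).toReal + (μ n (Set.Ioi x)).toReal := by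
    have := ENNReal.toReal_mono (by
      exact ENNReal.add_ne_top.2 ⟨ha, hb⟩) hcover
    rwa [ENNReal.toReal_one, ENNReal.toReal_add ha hb] at this
  linarith
end
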